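/- The bivariate spectral density h(ω₀, ω₁; λ) = (1/(2λ ω₀² ω₁ √(2π))) exp(-(log(ω₁/ω₀) + 2λ²)²/(8λ²)) on the unit simplex {(ω₀,ω₁) : ω₀, ω₁ > 0, ω₀ + ω₁ = 1} satisfies the moment conditions ∫ ω₀ h dω = 1 and ∫ ω₁ h dω = 1 (integrating over ω₀ ∈ (0,1) with ω₁ = 1 - ω₀). -/

import Mathlib

open Real MeasureTheory


noncomputable def HRf (t : ℝ) : ℝ := (1 + Real.exp t)⁻¹

lemma HRf_hasDerivAt (t : ℝ) :
    HasDerivAt HRf (-(Real.exp t) / (1 + Real.exp t) ^ 2) t := by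
  have h : HasDerivAt (fun t => 1 + Real.exp t) (Real.exp t) t :=
    (Real.hasDerivAt_exp t).const_add 1
  exact h.inv (by positivity)

lemma HRf_inj : Function.Injective HRf := by
  intro a b h
  have h2 : 1 + Real.exp a = 1 + Real.exp b := inv_injective h
  exact Real.exp_injective (by linarith)

lemma HRf_range : HRf '' Set.univ = Set.Ioo 0 1 := by
  rw [Set.image_univ]
  ext w
  simp only [Set.mem_range, Set.mem_Ioo]
  constructor
  · rintro ⟨t, rfl⟩
    have hE := Real.exp_pos t
    have h1 : (0:ℝ) < 1 + Real.exp t := by positivity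
    refine ⟨by unfold HRf; positivity, ?_⟩
    rw [HRf, inv_lt_one_iff₀]
    right; linarith
  · rintro ⟨hw0, hw1⟩
    refine ⟨Real.log ((1 - w) / w), ?_⟩
    rw [HRf, Real.exp_log (div_pos (by linarith) hw0)]
    field_simp
    ring

lemma HRsubst (g : ℝ → ℝ) :
    (∫ w in Set.Ioo (0:ℝ) 1, g w)
      = ∫ t, (Real.exp t / (1 + Real.exp t) ^ 2) * g (HRf t) := by
  have h := MeasureTheory.integral_image_eq_integral_abs_deriv_smul
      MeasurableSet.univ
      (fun t _ => (HRf_hasDerivAt t).hasDerivWithinAt)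
      HRf_inj.injOn g
  rw [HRf_range, Measure.restrict_univ] at h
  rw [h]
  congr 1; funext t
  rw [smul_eq_mul, abs_div, abs_neg, abs_of_pos (Real.exp_pos t),
    abs_of_pos (by positivity)]

lemma gauss_int (l a : ℝ) (hl : 0 < l) :
    ∫ t : ℝ, Real.exp (-(t + a)^2 / (8 * l^2)) = 2 * l * Real.sqrt (2 * Real.pi) := by
  have hb : (0:ℝ) < (8 * l^2)⁻¹ := by positivity
  have h1 : ∀ t:ℝ, -(t + a)^2 / (8*l^2) = -(8*l^2)⁻¹ * (t+a)^2 := by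
    intro t; field_simp
  simp_rw [h1]
  rw [MeasureTheory.integral_add_right_eq_self (fun t => Real.exp (-(8*l^2)⁻¹ * t^2)) a]
  rw [integral_gaussian]
  rw [show Real.pi / (8*l^2)⁻¹ = (2 * l * Real.sqrt (2*Real.pi))^2 from ?_]
  · exact Real.sqrt_sq (by positivity)
  · have h2 := Real.sq_sqrt (by positivity : (0:ℝ) ≤ 2*Real.pi)
    rw [div_eq_mul_inv, inv_inv]
    linear_combination (-4*l^2) * h2

/-- Bivariate Hüsler-Reiss spectral density on the unit simplex,
as a function of `ω₀ = ω`, `ω₁ = 1 - ω`. -/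
noncomputable def HRspec (l w0 w1 : ℝ) : ℝ :=
  (1 / (2 * l * w0 ^ 2 * w1 * Real.sqrt (2 * Real.pi))) *
    Real.exp (-(Real.log (w1 / w0) + 2 * l ^ 2) ^ 2 / (8 * l ^ 2))

/-- The bivariate Hüsler-Reiss spectral density satisfies the moment conditions
`∫ ω_i h dω = 1` for `i = 0, 1`. -/
theorem HRspec_moment_conditions (l : ℝ) (hl : 0 < l) :
    (∫ w in Set.Ioo (0 : ℝ) 1, w * HRspec l w (1 - w)) = 1 ∧
    (∫ w in Set.Ioo (0 : ℝ) 1, (1 - w) * HRspec l w (1 - w)) = 1 := by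
  have hs : (0:ℝ) < Real.sqrt (2 * Real.pi) := Real.sqrt_pos.mpr (by positivity)
  have hc : 2 * l * Real.sqrt (2 * Real.pi) ≠ 0 := by positivity
  have hlog : ∀ t : ℝ, Real.log ((1 - HRf t) / HRf t) = t := by
    intro t
    have hE := Real.exp_pos t
    have h1E : (0:ℝ) < 1 + Real.exp t := by positivity
    have h2 : (1 - HRf t) / HRf t = Real.exp t := by
      rw [HRf]; field_simp; ring
    rw [h2, Real.log_exp]
  have hw1 : ∀ t : ℝ, 1 - HRf t = Real.exp t / (1 + Real.exp t) := by
    intro t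
    have h1E : (0:ℝ) < 1 + Real.exp t := by positivity
    rw [HRf]; field_simp; ring
  constructor
  · rw [HRsubst (fun w => w * HRspec l w (1 - w))]
    have key : ∀ t : ℝ,
        (Real.exp t / (1 + Real.exp t) ^ 2) * (HRf t * HRspec l (HRf t) (1 - HRf t))
          = (2 * l * Real.sqrt (2 * Real.pi))⁻¹ *
            Real.exp (-(t + 2 * l ^ 2) ^ 2 / (8 * l ^ 2)) := by
      intro t
      have hE := Real.exp_pos t
      have h1E : (0:ℝ) < 1 + Real.exp t := by positivity
      rw [HRspec, hlog, hw1, HRf]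
      field_simp
    simp_rw [key]
    rw [MeasureTheory.integral_const_mul, gauss_int l (2 * l ^ 2) hl, inv_mul_cancel₀ hc]
  · rw [HRsubst (fun w => (1 - w) * HRspec l w (1 - w))]
    have key : ∀ t : ℝ,
        (Real.exp t / (1 + Real.exp t) ^ 2) * ((1 - HRf t) * HRspec l (HRf t) (1 - HRf t))
          = (2 * l * Real.sqrt (2 * Real.pi))⁻¹ *
            Real.exp (-(t + -(2 * l ^ 2)) ^ 2 / (8 * l ^ 2)) := by
      intro t
      have hE := Real.exp_pos t
      have h1E : (0:ℝ) < 1 + Real.exp t := by positivity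
      have hexp : Real.exp t * Real.exp (-(t + 2 * l ^ 2) ^ 2 / (8 * l ^ 2))
          = Real.exp (-(t + -(2 * l ^ 2)) ^ 2 / (8 * l ^ 2)) := by
        rw [← Real.exp_add]
        congr 1
        field_simp
        ring
      rw [HRspec, hlog, hw1, HRf, ← hexp]
      field_simp
    simp_rw [key]
    rw [MeasureTheory.integral_const_mul, gauss_int l (-(2 * l ^ 2)) hl, inv_mul_cancel₀ hc]
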